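/- Let f: R_{≥0}^n → R_{≥0} be a monotone symmetric norm and let β, b* ∈ R_{≥0}^n. Suppose that for every integer ℓ ∈ [1, n], |β|_{top-ℓ} ≤ γ·|b*|_{top-ℓ} for some γ ≥ 0. Then f(β) ≤ γ·f(b*). -/
import Mathlib

open Finset

/-- The top-ℓ norm of `x ∈ ℝ_{≥0}^n`: the maximum of `∑ α_j x_j` over `α ∈ [0,1]^n`
with `∑ α_j = ℓ`; for integer `ℓ ∈ [1,n]` this is the sum of the `ℓ` largest coordinates. -/
noncomputable def topNorm (n : ℕ) (x : Fin n → ℝ) (ℓ : ℝ) : ℝ :=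
  sSup {s : ℝ | ∃ α : Fin n → ℝ, (∀ j, 0 ≤ α j ∧ α j ≤ 1) ∧ (∑ j, α j) = ℓ ∧
    s = ∑ j, α j * x j}

lemma card_filter_val_lt (n ℓ : ℕ) (h : ℓ ≤ n) :
    ((Finset.univ : Finset (Fin n)).filter (fun i => i.val < ℓ)).card = ℓ := by
  have key : (Finset.univ : Finset (Fin n)).filter (fun i => i.val < ℓ)
      = Finset.map (Fin.castLEEmb h) Finset.univ := by
    ext i
    simp only [mem_filter, mem_univ, true_and, Finset.mem_map]
    constructor
    · intro hi
      exact ⟨⟨i.val, hi⟩, rfl⟩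
    · rintro ⟨a, rfl⟩
      exact a.isLt
  rw [key, Finset.card_map, Finset.card_univ, Fintype.card_fin]

/-- prefix sum of the `ℓ` first coordinates -/
noncomputable def psum (n : ℕ) (z : Fin n → ℝ) (ℓ : ℕ) : ℝ :=
  ∑ i : Fin n, if i.val < ℓ then z i else 0

lemma psum_eq_filter (n : ℕ) (z : Fin n → ℝ) (ℓ : ℕ) :
    psum n z ℓ = ∑ i ∈ Finset.univ.filter (fun i : Fin n => i.val < ℓ), z i := by
  rw [psum, Finset.sum_filter]

/-- lower bound: any sorted prefix sum is at most the topNorm -/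
lemma prefix_le_topNorm (n : ℕ) (z : Fin n → ℝ) (hz : ∀ j, 0 ≤ z j)
    (π : Equiv.Perm (Fin n)) (ℓ : ℕ) (h2 : ℓ ≤ n) :
    psum n (z ∘ π) ℓ ≤ topNorm n z ℓ := by
  apply le_csSup
  · refine ⟨∑ j, z j, ?_⟩
    rintro s ⟨α, hα, hsum, rfl⟩
    apply Finset.sum_le_sum
    intro i _
    obtain ⟨h0, h1⟩ := hα i
    nlinarith [hz i]
  · refine ⟨fun j => if ((π.symm j) : Fin n).val < ℓ then 1 else 0, ?_, ?_, ?_⟩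
    · intro j
      by_cases hc : ((π.symm j) : Fin n).val < ℓ <;> simp [hc]
    · rw [← Equiv.sum_comp π (fun j => if ((π.symm j) : Fin n).val < ℓ then (1:ℝ) else 0)]
      simp only [Equiv.symm_apply_apply]
      rw [Finset.sum_boole, card_filter_val_lt n ℓ h2]
    · rw [← Equiv.sum_comp π (fun j => (if ((π.symm j) : Fin n).val < ℓ then (1:ℝ) else 0) * z j)]
      simp only [Equiv.symm_apply_apply]
      rw [psum]
      apply Finset.sum_congr rfl
      intro i _
      split <;> simp

/-- upper bound: topNorm at integer ℓ is at most the sorted prefix sum -/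
lemma topNorm_le_prefix (n : ℕ) (z : Fin n → ℝ) (hz : ∀ j, 0 ≤ z j)
    (π : Equiv.Perm (Fin n)) (hA : Antitone (z ∘ π)) (ℓ : ℕ) (h1 : 1 ≤ ℓ) (h2 : ℓ ≤ n) :
    topNorm n z ℓ ≤ psum n (z ∘ π) ℓ := by
  set y : Fin n → ℝ := z ∘ π with hy
  have hy0 : ∀ i, 0 ≤ y i := fun i => hz _
  apply Real.sSup_le
  · rintro s ⟨α, hα, hsum, rfl⟩
    have hℓn : ℓ - 1 < n := by omega
    set m : ℝ := y ⟨ℓ - 1, hℓn⟩ with hm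
    have hm0 : 0 ≤ m := hy0 _
    have hre : (∑ j, α j * z j) = ∑ i, α (π i) * y i := by
      show (∑ j, α j * z j) = ∑ i, α (π i) * z (π i)
      exact (Equiv.sum_comp π (fun j => α j * z j)).symm
    have hre2 : (∑ i, α (π i)) = ℓ := by
      rw [Equiv.sum_comp π (fun j => α j)]; exact hsum
    rw [hre]
    have key : ∀ i : Fin n, α (π i) * y i ≤
        (if i.val < ℓ then y i + (α (π i) - 1) * m else α (π i) * m) := by
      intro i
      obtain ⟨h0, hone⟩ := hα (π i)
      split
      · rename_i hi
        have hge : m ≤ y i := by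
          apply hA
          show i ≤ ⟨ℓ - 1, hℓn⟩
          exact Fin.mk_le_mk.mpr (by omega) |>.trans_eq rfl |>.trans_eq rfl |>.trans_eq rfl
        nlinarith
      · rename_i hi
        have hle : y i ≤ m := by
          apply hA
          show (⟨ℓ - 1, hℓn⟩ : Fin n) ≤ i
          exact Fin.mk_le_mk.mpr (by omega)
        nlinarith
    calc (∑ i, α (π i) * y i)
        ≤ ∑ i : Fin n, (if i.val < ℓ then y i + (α (π i) - 1) * m else α (π i) * m) :=
          Finset.sum_le_sum (fun i _ => key i)
      _ = psum n y ℓ := by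
          have expand : ∀ i : Fin n,
              (if i.val < ℓ then y i + (α (π i) - 1) * m else α (π i) * m)
              = (if i.val < ℓ then y i else 0) + α (π i) * m - (if i.val < ℓ then m else 0) := by
            intro i; split <;> ring
          rw [Finset.sum_congr rfl (fun i _ => expand i)]
          rw [psum]
          have : (∑ i : Fin n, ((if i.val < ℓ then y i else 0) + α (π i) * m
              - (if i.val < ℓ then m else 0)))
              = (∑ i : Fin n, (if i.val < ℓ then y i else 0))
                + (∑ i : Fin n, α (π i)) * m - (∑ i : Fin n, (if i.val < ℓ then m else 0)) := by
            rw [Finset.sum_sub_distrib, Finset.sum_add_distrib, Finset.sum_mul]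
          rw [this, hre2]
          have hms : (∑ i : Fin n, (if i.val < ℓ then m else 0)) = ℓ * m := by
            rw [← Finset.sum_filter, Finset.sum_const, card_filter_val_lt n ℓ h2,
              nsmul_eq_mul]
          rw [hms]; ring
  · rw [psum_eq_filter]
    exact Finset.sum_nonneg (fun i _ => hy0 i)

/-- Key majorization lemma: prefix-sum domination implies norm domination. -/
lemma lemB (n : ℕ) (f : (Fin n → ℝ) → ℝ)
    (hhom : ∀ (x : Fin n → ℝ) (l : ℝ), (∀ j, 0 ≤ x j) → 0 ≤ l → f (l • x) = l * f x)
    (hsub : ∀ x y : Fin n → ℝ, (∀ j, 0 ≤ x j) → (∀ j, 0 ≤ y j) → f (x + y) ≤ f x + f y)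
    (hmono : ∀ x y : Fin n → ℝ, (∀ j, 0 ≤ x j) → (∀ j, x j ≤ y j) → f x ≤ f y)
    (hsym : ∀ (x : Fin n → ℝ) (σ : Equiv.Perm (Fin n)), (∀ j, 0 ≤ x j) → f (x ∘ σ) = f x) :
    ∀ (m : ℕ) (x y : Fin n → ℝ), (∀ j, 0 ≤ x j) → (∀ j, 0 ≤ y j) →
      Antitone x → Antitone y →
      (∀ ℓ : ℕ, ℓ ≤ n → psum n x ℓ ≤ psum n y ℓ) →
      (Finset.univ.filter (fun i => x i ≠ y i)).card ≤ m → f x ≤ f y := by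
  intro m
  induction m with
  | zero =>
    intro x y hx hy _ _ _ hcard
    have hxy : x = y := by
      funext i
      by_contra h
      have hmem : i ∈ Finset.univ.filter (fun i => x i ≠ y i) := by
        simp only [mem_filter, mem_univ, true_and]; exact h
      have := Finset.card_pos.mpr ⟨i, hmem⟩
      omega
    rw [hxy]
  | succ m ih =>
    intro x y hx hy hax hay hps hcard
    by_cases hle : ∀ i, x i ≤ y i
    · exact hmono x y hx hle
    push_neg at hle
    set D := Finset.univ.filter (fun i : Fin n => y i < x i) with hD
    have hDne : D.Nonempty := by
      obtain ⟨i, hi⟩ := hle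
      exact ⟨i, by simp only [hD, mem_filter, mem_univ, true_and]; exact hi⟩
    set k := D.min' hDne with hkdef
    have hk : y k < x k := by
      have := D.min'_mem hDne
      simpa only [hD, mem_filter, mem_univ, true_and] using this
    have hkmin : ∀ i, i < k → x i ≤ y i := by
      intro i hik
      by_contra h
      push_neg at h
      have hmem : i ∈ D := by simp only [hD, mem_filter, mem_univ, true_and]; exact h
      exact absurd (D.min'_le i hmem) (not_le.mpr hik)
    -- existence of j
    have hEx : ∃ i, i < k ∧ x i < y i := by
      by_contra h
      push_neg at h
      have heq : ∀ i, i < k → x i = y i := fun i hik =>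
        le_antisymm (hkmin i hik) (h i hik)
      have hlt : psum n y (k.val + 1) < psum n x (k.val + 1) := by
        rw [psum, psum]
        apply Finset.sum_lt_sum
        · intro i _
          by_cases hi : i.val < k.val + 1
          · simp only [hi, if_true]
            rcases lt_or_eq_of_le (Nat.lt_succ_iff.mp hi) with h' | h'
            · exact le_of_eq (heq i (Fin.lt_def.mpr h')).symm
            · have hik : i = k := Fin.ext h'
              rw [hik]; exact hk.le
          · simp [hi]
        · exact ⟨k, Finset.mem_univ k, by simp only [Nat.lt_succ_self, if_true]; exact hk⟩
      exact absurd (hps (k.val + 1) k.isLt) (not_le.mpr hlt)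
    set E := Finset.univ.filter (fun i : Fin n => i < k ∧ x i < y i) with hE
    have hEne : E.Nonempty := by
      obtain ⟨i, h1, h2⟩ := hEx
      exact ⟨i, by simp only [hE, mem_filter, mem_univ, true_and]; exact ⟨h1, h2⟩⟩
    set j := E.max' hEne with hjdef
    have hjprop : j < k ∧ x j < y j := by
      have := E.max'_mem hEne
      simpa only [hE, mem_filter, mem_univ, true_and] using this
    obtain ⟨hjk, hxj⟩ := hjprop
    have hjmax : ∀ i, j < i → i < k → x i = y i := by
      intro i hji hik
      refine le_antisymm (hkmin i hik) ?_
      by_contra h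
      push_neg at h
      have hmem : i ∈ E := by
        simp only [hE, mem_filter, mem_univ, true_and]; exact ⟨hik, h⟩
      exact absurd (E.le_max' i hmem) (not_le.mpr hji)
    have hxkj : x k ≤ x j := hax hjk.le
    have hykj : y k < y j := lt_of_lt_of_le hk (hxkj.trans hxj.le)
    set t : ℝ := min (y j - x j) (x k - y k) with ht
    have ht0 : 0 < t := lt_min (by linarith) (by linarith)
    have hta : t ≤ y j - x j := min_le_left _ _
    have htb : t ≤ x k - y k := min_le_right _ _
    have htd : t ≤ y j - y k := by
      have : x k ≤ x j := hxkj
      linarith [min_le_right (y j - x j) (x k - y k)]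
    set lam : ℝ := t / (y j - y k) with hlam
    have hd0 : (0:ℝ) < y j - y k := by linarith
    have hlam0 : 0 ≤ lam := div_nonneg ht0.le hd0.le
    have hlam1 : lam ≤ 1 := (div_le_one hd0).mpr htd
    have hlamt : lam * (y j - y k) = t := div_mul_cancel₀ t hd0.ne'
    set y' : Fin n → ℝ := fun i => if i = j then y j - t else if i = k then y k + t else y i
      with hy'def
    have hjk' : j ≠ k := ne_of_lt hjk
    have hy'j : y' j = y j - t := by simp only [hy'def, if_pos rfl]
    have hy'k : y' k = y k + t := by
      show (if k = j then y j - t else if k = k then y k + t else y k) = y k + t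
      rw [if_neg (Ne.symm hjk'), if_pos rfl]
    have hy'other : ∀ i, i ≠ j → i ≠ k → y' i = y i := by
      intro i h1 h2; simp only [hy'def, if_neg h1, if_neg h2]
    have hxjy' : x j ≤ y' j := by rw [hy'j]; linarith
    have hy'kx : y' k ≤ x k := by rw [hy'k]; linarith
    -- convex combination
    have hcomb : y' = (1 - lam) • y + lam • (y ∘ Equiv.swap j k) := by
      funext i
      simp only [Pi.add_apply, Pi.smul_apply, smul_eq_mul, Function.comp_apply]
      by_cases hij : i = j
      · rw [hij, hy'j, Equiv.swap_apply_left]; linarith [hlamt]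
      by_cases hik : i = k
      · rw [hik, hy'k, Equiv.swap_apply_right]; linarith [hlamt]
      · rw [hy'other i hij hik, Equiv.swap_apply_of_ne_of_ne hij hik]; ring
    have hy'0 : ∀ i, 0 ≤ y' i := by
      intro i
      by_cases hij : i = j
      · rw [hij]; linarith [hx j, hxjy']
      by_cases hik : i = k
      · rw [hik, hy'k]; linarith [hy k]
      · rw [hy'other i hij hik]; exact hy i
    have hfy' : f y' ≤ f y := by
      have h1 : ∀ i, 0 ≤ ((1 - lam) • y) i := fun i => by
        simp only [Pi.smul_apply, smul_eq_mul]
        exact mul_nonneg (by linarith) (hy i)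
      have h2 : ∀ i, 0 ≤ (lam • (y ∘ Equiv.swap j k)) i := fun i => by
        simp only [Pi.smul_apply, smul_eq_mul, Function.comp_apply]
        exact mul_nonneg hlam0 (hy _)
      calc f y' = f ((1 - lam) • y + lam • (y ∘ Equiv.swap j k)) := by rw [hcomb]
        _ ≤ f ((1 - lam) • y) + f (lam • (y ∘ Equiv.swap j k)) := hsub _ _ h1 h2
        _ = (1 - lam) * f y + lam * f (y ∘ Equiv.swap j k) := by
            have e1 := hhom y (1 - lam) hy (by linarith)
            have e2 := hhom (y ∘ (Equiv.swap j k : Equiv.Perm (Fin n))) lam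
              (fun i => hy _) hlam0
            rw [e1, e2]
        _ = (1 - lam) * f y + lam * f y := by rw [hsym y (Equiv.swap j k) hy]
        _ = f y := by ring
    -- y' is antitone
    have hay' : Antitone y' := by
      intro a b hab
      rcases eq_or_lt_of_le hab with rfl | hab'
      · exact le_refl _
      by_cases haj : a = j
      · subst haj
        have hbj : b ≠ j := ne_of_gt hab'
        by_cases hbk : b = k
        · subst hbk; rw [hy'j, hy'k]; linarith
        · rw [hy'other b hbj hbk, hy'j]
          rcases lt_trichotomy b k with hbk' | h | hbk'
          · have := hjmax b hab' hbk'
            have : x b ≤ x j := hax hab'.le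
            linarith [hjmax b hab' hbk', hax hab'.le, hta]
          · exact absurd h hbk
          · have h1 : y b ≤ y k := hay hbk'.le
            linarith
      by_cases hak : a = k
      · subst hak
        have hbk : b ≠ k := ne_of_gt hab'
        have hbj : b ≠ j := by
          intro h; rw [h] at hab'; exact absurd (hjk.trans hab') (lt_irrefl j)
        rw [hy'other b hbj hbk, hy'k]
        have : y b ≤ y k := hay hab'.le
        linarith
      · rw [hy'other a haj hak]
        by_cases hbj : b = j
        · subst hbj; rw [hy'j]
          have : y j ≤ y a := hay hab'.le
          linarith
        by_cases hbk : b = k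
        · subst hbk; rw [hy'k]
          have hak' : a < k := hab'
          have h1 : x a ≤ y a := hkmin a hak'
          have h2 : x k ≤ x a := hax hak'.le
          linarith
        · rw [hy'other b hbj hbk]
          exact hay hab'.le
    -- prefix sums preserved
    have hps' : ∀ ℓ : ℕ, ℓ ≤ n → psum n x ℓ ≤ psum n y' ℓ := by
      intro ℓ hℓ
      have hdecomp : ∀ i : Fin n, y' i
          = y i + (if i = j then -t else 0) + (if i = k then t else 0) := by
        intro i
        by_cases hij : i = j
        · subst hij; rw [hy'j, if_pos rfl, if_neg hjk']; ring
        by_cases hik : i = k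
        · subst hik
          rw [hy'k, if_neg (Ne.symm hjk'), if_pos rfl]; ring
        · rw [hy'other i hij hik, if_neg hij, if_neg hik]; ring
      have hsy' : psum n y' ℓ = psum n y ℓ
          + (if j.val < ℓ then -t else 0) + (if k.val < ℓ then t else 0) := by
        rw [psum_eq_filter, psum_eq_filter]
        rw [Finset.sum_congr rfl (fun i _ => hdecomp i)]
        rw [Finset.sum_add_distrib, Finset.sum_add_distrib]
        rw [Finset.sum_ite_eq' _ j (fun _ => -t), Finset.sum_ite_eq' _ k (fun _ => t)]
        simp only [mem_filter, mem_univ, true_and]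
      rcases lt_or_ge j.val ℓ with hjl | hjl
      · rcases lt_or_ge k.val ℓ with hkl | hkl
        · -- both: cancel
          rw [hsy', if_pos hjl, if_pos hkl]
          have := hps ℓ hℓ
          linarith
        · -- j in, k out: need t ≤ psum y - psum x
          rw [hsy', if_pos hjl, if_neg (not_lt.mpr hkl)]
          have hsum : t ≤ (∑ i ∈ Finset.univ.filter (fun i : Fin n => i.val < ℓ), (y i - x i)) := by
            have hjm : j ∈ Finset.univ.filter (fun i : Fin n => i.val < ℓ) := by
              simp only [mem_filter, mem_univ, true_and]; exact hjl
            have hnn : ∀ i ∈ Finset.univ.filter (fun i : Fin n => i.val < ℓ), 0 ≤ y i - x i := by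
              intro i hi
              simp only [mem_filter, mem_univ, true_and] at hi
              have hik : i < k := Fin.lt_def.mpr (lt_of_lt_of_le hi hkl)
              linarith [hkmin i hik]
            have := Finset.single_le_sum hnn hjm
            linarith
          rw [psum_eq_filter, psum_eq_filter] at *
          rw [Finset.sum_sub_distrib] at hsum
          linarith
      · -- j out hence k out
        have hkl : ¬ (k.val < ℓ) := by
          intro h
          have : j.val < k.val := hjk
          omega
        rw [hsy', if_neg (not_lt.mpr hjl), if_neg hkl]
        have := hps ℓ hℓ
        linarith
    -- cardinality decreases
    have hjmem : j ∈ Finset.univ.filter (fun i => x i ≠ y i) := by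
      simp only [mem_filter, mem_univ, true_and]; exact ne_of_lt hxj
    have hkmem : k ∈ Finset.univ.filter (fun i => x i ≠ y i) := by
      simp only [mem_filter, mem_univ, true_and]; exact (ne_of_lt hk).symm
    have hcard' : (Finset.univ.filter (fun i => x i ≠ y' i)).card ≤ m := by
      rcases min_cases (y j - x j) (x k - y k) with ⟨hmin, _⟩ | ⟨hmin, _⟩
      · -- t = y j - x j : y' j = x j
        have hsubset : Finset.univ.filter (fun i => x i ≠ y' i)
            ⊆ (Finset.univ.filter (fun i => x i ≠ y i)).erase j := by
          intro i hi
          simp only [mem_filter, mem_univ, true_and] at hi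
          rw [Finset.mem_erase]
          constructor
          · intro h; subst h
            apply hi
            rw [hy'j, ht, hmin]; ring
          · simp only [mem_filter, mem_univ, true_and]
            by_cases hik : i = k
            · rw [hik]; exact (ne_of_lt hk).symm
            by_cases hij : i = j
            · rw [hij]; exact ne_of_lt hxj
            · rw [← hy'other i hij hik]; exact hi
        have h1 := Finset.card_le_card hsubset
        rw [Finset.card_erase_of_mem hjmem] at h1
        have h2 := Finset.card_pos.mpr ⟨j, hjmem⟩
        omega
      · -- t = x k - y k : y' k = x k
        have hsubset : Finset.univ.filter (fun i => x i ≠ y' i)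
            ⊆ (Finset.univ.filter (fun i => x i ≠ y i)).erase k := by
          intro i hi
          simp only [mem_filter, mem_univ, true_and] at hi
          rw [Finset.mem_erase]
          constructor
          · intro h; subst h
            apply hi
            rw [hy'k, ht, hmin]; ring
          · simp only [mem_filter, mem_univ, true_and]
            by_cases hij : i = j
            · rw [hij]; exact ne_of_lt hxj
            by_cases hik : i = k
            · rw [hik]; exact (ne_of_lt hk).symm
            · rw [← hy'other i hij hik]; exact hi
        have h1 := Finset.card_le_card hsubset
        rw [Finset.card_erase_of_mem hkmem] at h1
        have h2 := Finset.card_pos.mpr ⟨k, hkmem⟩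
        omega
    exact le_trans (ih x y' hx hy'0 hax hay' hps' hcard') hfy'

theorem stmt19 (n : ℕ) (f : (Fin n → ℝ) → ℝ)
    (hne : ∀ x : Fin n → ℝ, (∀ j, 0 ≤ x j) → (f x = 0 ↔ x = 0))
    (hhom : ∀ (x : Fin n → ℝ) (l : ℝ), (∀ j, 0 ≤ x j) → 0 ≤ l → f (l • x) = l * f x)
    (hsub : ∀ x y : Fin n → ℝ, (∀ j, 0 ≤ x j) → (∀ j, 0 ≤ y j) → f (x + y) ≤ f x + f y)
    (hmono : ∀ x y : Fin n → ℝ, (∀ j, 0 ≤ x j) → (∀ j, x j ≤ y j) → f x ≤ f y)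
    (hsym : ∀ (x : Fin n → ℝ) (σ : Equiv.Perm (Fin n)), (∀ j, 0 ≤ x j) →
      f (x ∘ σ) = f x)
    (β bstar : Fin n → ℝ) (hβ : ∀ j, 0 ≤ β j) (hb : ∀ j, 0 ≤ bstar j)
    (γ : ℝ) (hγ : 0 ≤ γ)
    (htop : ∀ ℓ : ℕ, 1 ≤ ℓ → ℓ ≤ n →
      topNorm n β (ℓ : ℝ) ≤ γ * topNorm n bstar (ℓ : ℝ)) :
    f β ≤ γ * f bstar := by
  have hsort : ∀ z : Fin n → ℝ, ∃ π : Equiv.Perm (Fin n), Antitone (z ∘ π) := by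
    intro z
    refine ⟨(Fin.revPerm).trans (Tuple.sort z), ?_⟩
    intro a b hab
    have h1 : Monotone (z ∘ Tuple.sort z) := Tuple.monotone_sort z
    simp only [Function.comp_apply, Equiv.trans_apply]
    exact h1 (Fin.rev_le_rev.mpr hab)
  obtain ⟨πx, hπx⟩ := hsort β
  obtain ⟨πy, hπy⟩ := hsort bstar
  set x : Fin n → ℝ := β ∘ πx with hxdef
  set y : Fin n → ℝ := bstar ∘ πy with hydef
  have hx0 : ∀ i, 0 ≤ x i := fun i => hβ _
  have hy0 : ∀ i, 0 ≤ y i := fun i => hb _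
  have hgy0 : ∀ i, 0 ≤ (γ • y) i := fun i => mul_nonneg hγ (hy0 i)
  have hgya : Antitone (γ • y) := by
    intro a b hab
    simp only [Pi.smul_apply, smul_eq_mul]
    exact mul_le_mul_of_nonneg_left (hπy hab) hγ
  have hps : ∀ ℓ : ℕ, ℓ ≤ n → psum n x ℓ ≤ psum n (γ • y) ℓ := by
    intro ℓ hℓ
    have hsmul : psum n (γ • y) ℓ = γ * psum n y ℓ := by
      rw [psum, psum, Finset.mul_sum]
      apply Finset.sum_congr rfl
      intro i _
      split <;> simp
    rw [hsmul]
    rcases Nat.eq_zero_or_pos ℓ with rfl | h1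
    · simp [psum]
    calc psum n x ℓ ≤ topNorm n β ℓ := prefix_le_topNorm n β hβ πx ℓ hℓ
      _ ≤ γ * topNorm n bstar ℓ := htop ℓ h1 hℓ
      _ ≤ γ * psum n y ℓ :=
          mul_le_mul_of_nonneg_left (topNorm_le_prefix n bstar hb πy hπy ℓ h1 hℓ) hγ
  have hkey := lemB n f hhom hsub hmono hsym
    ((Finset.univ.filter (fun i => x i ≠ (γ • y) i)).card) x (γ • y)
    hx0 hgy0 hπx hgya hps le_rfl
  have h1 : f x = f β := hsym β πx hβ
  have h2 : f (γ • y) = γ * f y := hhom y γ hy0 hγ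
  have h3 : f y = f bstar := hsym bstar πy hb
  rw [h1, h2, h3] at hkey
  exact hkey
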